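/- Let q^ξ(ξ0) := det(ξ0 A^0 + A(ξ)) be the characteristic polynomial of the first-order formulation (up to sign convention). If all zeros of p^ξ are nonzero, then the zero ξ0 = 0 of q^ξ has algebraic multiplicity exactly (d−1)n, and this equals the dimension of ker A(ξ) for any nonzero ξ, so the zero mode is semisimple. -/

import Mathlib

open Matrix

/-- The second-order symbol `B(ξ0, ξ) = ξ0² B00 + ξ0 Σ_j ξ_j C^j + Σ_{j,k} ξ_j ξ_k B^{jk}`. -/
noncomputable def Bsym (n d : ℕ) (B00 : Matrix (Fin n) (Fin n) ℝ)
    (Cc : Fin d → Matrix (Fin n) (Fin n) ℝ)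
    (B : Fin d → Fin d → Matrix (Fin n) (Fin n) ℝ)
    (ξ0 : ℝ) (ξ : Fin d → ℝ) : Matrix (Fin n) (Fin n) ℝ :=
  ξ0 ^ 2 • B00 + ξ0 • ∑ j, ξ j • Cc j + ∑ j, ∑ k, (ξ j * ξ k) • B j k

/-- The first-order block symbol `A(ξ0, ξ)`, of size `(d+1)n × (d+1)n`; block index
`Sum.inl ()` is the `P`-block and `Sum.inr i` the `Q_i`-blocks. -/
noncomputable def Asym (n d : ℕ) (B00 : Matrix (Fin n) (Fin n) ℝ)
    (Cc : Fin d → Matrix (Fin n) (Fin n) ℝ)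
    (B : Fin d → Fin d → Matrix (Fin n) (Fin n) ℝ)
    (ξ0 : ℝ) (ξ : Fin d → ℝ) :
    Matrix ((Unit ⊕ Fin d) × Fin n) ((Unit ⊕ Fin d) × Fin n) ℝ :=
  fun p q =>
    match p, q with
    | (Sum.inl _, a), (Sum.inl _, b) => (ξ0 • B00 + ∑ k, ξ k • Cc k) a b
    | (Sum.inl _, a), (Sum.inr j, b) => (∑ k, ξ k • B j k) a b
    | (Sum.inr i, a), (Sum.inl _, b) => if a = b then -ξ i else 0
    | (Sum.inr i, a), (Sum.inr j, b) => if i = j ∧ a = b then ξ0 else 0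

/-- The dispersion polynomial `p^ξ(ξ0) = det B(ξ0, ξ)` as a polynomial in `ξ0`. -/
noncomputable def dispPoly (n d : ℕ) (B00 : Matrix (Fin n) (Fin n) ℝ)
    (Cc : Fin d → Matrix (Fin n) (Fin n) ℝ)
    (B : Fin d → Fin d → Matrix (Fin n) (Fin n) ℝ)
    (ξ : Fin d → ℝ) : Polynomial ℝ :=
  ((Polynomial.X : Polynomial ℝ) ^ 2 • B00.map Polynomial.C +
    (Polynomial.X : Polynomial ℝ) • (∑ j, ξ j • Cc j).map Polynomial.C +
    (∑ j, ∑ k, (ξ j * ξ k) • B j k).map Polynomial.C).det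

/-- The block-diagonal matrix `A⁰ = diag(B00, I, ..., I)` of the first-order formulation. -/
noncomputable def A0mat (n d : ℕ) (B00 : Matrix (Fin n) (Fin n) ℝ) :
    Matrix ((Unit ⊕ Fin d) × Fin n) ((Unit ⊕ Fin d) × Fin n) ℝ :=
  fun p q =>
    match p, q with
    | (Sum.inl _, a), (Sum.inl _, b) => B00 a b
    | (Sum.inr i, a), (Sum.inr j, b) => if i = j ∧ a = b then 1 else 0
    | _, _ => 0

/-- The characteristic polynomial `q^ξ(ξ0) = det(ξ0 A⁰ + A(ξ))` of the first-order
formulation as a polynomial in `ξ0`. -/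
noncomputable def qPoly (n d : ℕ) (B00 : Matrix (Fin n) (Fin n) ℝ)
    (Cc : Fin d → Matrix (Fin n) (Fin n) ℝ)
    (B : Fin d → Fin d → Matrix (Fin n) (Fin n) ℝ)
    (ξ : Fin d → ℝ) : Polynomial ℝ :=
  ((Polynomial.X : Polynomial ℝ) • (A0mat n d B00).map Polynomial.C +
    (Asym n d B00 Cc B 0 ξ).map Polynomial.C).det

def blkEquiv (n d : ℕ) : ((Unit ⊕ Fin d) × Fin n) ≃ (Fin n ⊕ Fin d × Fin n) where
  toFun p := match p with
    | (Sum.inl _, a) => Sum.inl a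
    | (Sum.inr j, a) => Sum.inr (j, a)
  invFun q := match q with
    | Sum.inl a => (Sum.inl (), a)
    | Sum.inr (j, a) => (Sum.inr j, a)
  left_inv := by rintro ⟨u | j, a⟩ <;> rfl
  right_inv := by rintro (a | ⟨j, a⟩) <;> rfl

lemma blk_decomp (n d : ℕ) (B00 : Matrix (Fin n) (Fin n) ℝ)
    (Cc : Fin d → Matrix (Fin n) (Fin n) ℝ)
    (B : Fin d → Fin d → Matrix (Fin n) (Fin n) ℝ)
    (ξ : Fin d → ℝ) (t : ℝ) :
    t • A0mat n d B00 + Asym n d B00 Cc B 0 ξ =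
      (Matrix.fromBlocks (t • B00 + ∑ k, ξ k • Cc k)
        (Matrix.of fun a (jb : Fin d × Fin n) => (∑ k, ξ k • B jb.1 k) a jb.2)
        (Matrix.of fun (ia : Fin d × Fin n) b => if ia.2 = b then -ξ ia.1 else 0)
        (t • (1 : Matrix (Fin d × Fin n) (Fin d × Fin n) ℝ))).submatrix
        (blkEquiv n d) (blkEquiv n d) := by
  ext ⟨u | i, a⟩ ⟨u' | j, b⟩ <;>
    simp [A0mat, Asym, blkEquiv, Matrix.one_apply, Prod.ext_iff, and_comm]

lemma eval_q (n d : ℕ) (B00 : Matrix (Fin n) (Fin n) ℝ)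
    (Cc : Fin d → Matrix (Fin n) (Fin n) ℝ)
    (B : Fin d → Fin d → Matrix (Fin n) (Fin n) ℝ)
    (ξ : Fin d → ℝ) (t : ℝ) (ht : t ≠ 0) :
    (qPoly n d B00 Cc B ξ).eval t =
      t ^ (d * n) * ((t⁻¹) ^ n * (dispPoly n d B00 Cc B ξ).eval t) := by
  classical
  set S := ∑ k, ξ k • Cc k with hS
  set M := ∑ j, ∑ k, (ξ j * ξ k) • B j k with hM
  have h1 : (qPoly n d B00 Cc B ξ).eval t =
      (t • A0mat n d B00 + Asym n d B00 Cc B 0 ξ).det := by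
    have := RingHom.map_det (Polynomial.evalRingHom t)
      ((Polynomial.X : Polynomial ℝ) • (A0mat n d B00).map Polynomial.C +
        (Asym n d B00 Cc B 0 ξ).map Polynomial.C)
    rw [qPoly]
    simp only [Polynomial.coe_evalRingHom] at this
    rw [show ∀ p : Polynomial ℝ, p.eval t = (Polynomial.evalRingHom t) p from fun _ => rfl,
      RingHom.map_det]
    congr 1
    ext p q
    simp [Matrix.map_apply, Matrix.add_apply, Matrix.smul_apply, smul_eq_mul]
    ring
  have h2 : (dispPoly n d B00 Cc B ξ).eval t =
      (t ^ 2 • B00 + t • S + M).det := by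
    rw [dispPoly,
      show ∀ p : Polynomial ℝ, p.eval t = (Polynomial.evalRingHom t) p from fun _ => rfl,
      RingHom.map_det]
    congr 1
    ext p q
    simp [Matrix.map_apply, Matrix.add_apply, Matrix.smul_apply, smul_eq_mul, hS, hM]
    ring
  rw [h1, blk_decomp, Matrix.det_submatrix_equiv_self]
  haveI : Invertible (t • (1 : Matrix (Fin d × Fin n) (Fin d × Fin n) ℝ)) := by
    apply Matrix.invertibleOfIsUnitDet
    simp [Matrix.det_smul, isUnit_iff_ne_zero, pow_ne_zero, ht]
  rw [Matrix.det_fromBlocks₂₂]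
  have hinv : ⅟ (t • (1 : Matrix (Fin d × Fin n) (Fin d × Fin n) ℝ)) = t⁻¹ • 1 := by
    apply invOf_eq_right_inv
    rw [smul_mul_smul_comm]
    simp [ht]
  have hBC : (Matrix.of fun a (jb : Fin d × Fin n) => (∑ k, ξ k • B jb.1 k) a jb.2) *
      (Matrix.of fun (ia : Fin d × Fin n) b => if ia.2 = b then -ξ ia.1 else 0) = -M := by
    ext a b
    simp only [Matrix.mul_apply, Matrix.of_apply, Fintype.sum_prod_type, hM,
      Matrix.neg_apply, Finset.sum_apply, Matrix.sum_apply, Matrix.smul_apply, smul_eq_mul,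
      mul_ite, mul_zero, mul_neg, Finset.sum_ite_eq', Finset.mem_univ, if_true]
    rw [← Finset.sum_neg_distrib]
    refine Finset.sum_congr rfl fun j _ => ?_
    rw [neg_inj, Finset.sum_mul]
    exact Finset.sum_congr rfl fun k _ => by ring
  have hSchur : (t • B00 + S) -
      (Matrix.of fun a (jb : Fin d × Fin n) => (∑ k, ξ k • B jb.1 k) a jb.2) *
        ⅟ (t • (1 : Matrix (Fin d × Fin n) (Fin d × Fin n) ℝ)) *
        (Matrix.of fun (ia : Fin d × Fin n) b => if ia.2 = b then -ξ ia.1 else 0) =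
      t⁻¹ • (t ^ 2 • B00 + t • S + M) := by
    rw [hinv, Matrix.mul_smul, Matrix.mul_one, Matrix.smul_mul, hBC]
    rw [smul_add, smul_add, smul_smul, smul_smul]
    rw [show t⁻¹ * t ^ 2 = t by field_simp, show t⁻¹ * t = 1 by field_simp]
    simp [sub_eq_add_neg]
  rw [hSchur, Matrix.det_smul, Matrix.det_smul, Matrix.det_one, mul_one, h2]
  simp [Fintype.card_prod, mul_comm]

lemma qPoly_eq (n d : ℕ) (B00 : Matrix (Fin n) (Fin n) ℝ)
    (Cc : Fin d → Matrix (Fin n) (Fin n) ℝ)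
    (B : Fin d → Fin d → Matrix (Fin n) (Fin n) ℝ)
    (ξ : Fin d → ℝ) (hd : 1 ≤ d) :
    qPoly n d B00 Cc B ξ =
      (Polynomial.X : Polynomial ℝ) ^ ((d - 1) * n) * dispPoly n d B00 Cc B ξ := by
  have hdn : d * n = (d - 1) * n + n := by
    rw [← Nat.succ_mul, Nat.succ_eq_add_one, Nat.sub_add_cancel hd]
  apply Polynomial.eq_of_infinite_eval_eq
  apply Set.Infinite.mono (s := ({0}ᶜ : Set ℝ))
  · intro t ht
    have ht : t ≠ 0 := ht
    simp only [Set.mem_setOf_eq, Polynomial.eval_mul, Polynomial.eval_pow, Polynomial.eval_X]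
    rw [eval_q n d B00 Cc B ξ t ht, hdn, pow_add, mul_assoc, ← mul_assoc (t ^ n),
      ← mul_pow, mul_inv_cancel₀ ht, one_pow, one_mul]
  · exact (Set.finite_singleton 0).infinite_compl

lemma eval0_disp (n d : ℕ) (B00 : Matrix (Fin n) (Fin n) ℝ)
    (Cc : Fin d → Matrix (Fin n) (Fin n) ℝ)
    (B : Fin d → Fin d → Matrix (Fin n) (Fin n) ℝ)
    (ξ : Fin d → ℝ) :
    (dispPoly n d B00 Cc B ξ).eval 0 = (∑ j, ∑ k, (ξ j * ξ k) • B j k).det := by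
  rw [dispPoly,
    show ∀ p : Polynomial ℝ, p.eval 0 = (Polynomial.evalRingHom 0) p from fun _ => rfl,
    RingHom.map_det]
  congr 1
  ext p q
  simp [Matrix.map_apply, Matrix.add_apply, Matrix.smul_apply, smul_eq_mul]

/-- If all zeros of `p^ξ` are nonzero (i.e. `p^ξ(0) ≠ 0`), then `ξ0 = 0` is a zero of
`q^ξ` of algebraic multiplicity exactly `(d−1)n`, which equals `dim ker A(0,ξ)` for
nonzero `ξ`: the zero mode is semisimple. -/
theorem stmt10 (n d : ℕ) (B00 : Matrix (Fin n) (Fin n) ℝ)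
    (Cc : Fin d → Matrix (Fin n) (Fin n) ℝ)
    (B : Fin d → Fin d → Matrix (Fin n) (Fin n) ℝ)
    (ξ : Fin d → ℝ) (hξ : ξ ≠ 0)
    (h0 : (dispPoly n d B00 Cc B ξ).eval 0 ≠ 0) :
    (qPoly n d B00 Cc B ξ).rootMultiplicity 0 = (d - 1) * n ∧
    Module.finrank ℝ (LinearMap.ker (Asym n d B00 Cc B 0 ξ).mulVecLin) = (d - 1) * n := by
  classical
  obtain ⟨i0, hi0⟩ := Function.ne_iff.mp hξ
  have hi0 : ξ i0 ≠ 0 := by simpa using hi0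
  have hd : 1 ≤ d := i0.pos
  have hdn : d * n = (d - 1) * n + n := by
    rw [← Nat.succ_mul, Nat.succ_eq_add_one, Nat.sub_add_cancel hd]
  have hMdet : (∑ j, ∑ k, (ξ j * ξ k) • B j k).det ≠ 0 := by
    rw [eval0_disp n d B00 Cc B ξ] at h0; exact h0
  constructor
  · have hp : dispPoly n d B00 Cc B ξ ≠ 0 := fun h => h0 (by rw [h]; simp)
    rw [qPoly_eq n d B00 Cc B ξ hd, mul_comm,
      show (Polynomial.X : Polynomial ℝ) ^ ((d - 1) * n) =
        (Polynomial.X - Polynomial.C (0 : ℝ)) ^ ((d - 1) * n) by simp,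
      Polynomial.rootMultiplicity_mul_X_sub_C_pow hp,
      Polynomial.rootMultiplicity_eq_zero h0, zero_add]
  · -- kernel dimension
    set L : (Fin d → Fin n → ℝ) →ₗ[ℝ] (Fin n → ℝ) :=
      ∑ j, ((∑ k, ξ k • B j k).mulVecLin).comp (LinearMap.proj j) with hL
    have hLapp : ∀ l, L l = ∑ j, (∑ k, ξ k • B j k).mulVec (l j) := by
      intro l
      simp [hL, LinearMap.sum_apply]
      refine Finset.sum_congr rfl fun j _ => ?_
      rw [show (∑ k, ξ k • B j k) *ᵥ l j = ∑ k, (ξ k • B j k) *ᵥ l j from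
        map_sum (Matrix.mulVec.addMonoidHomLeft (l j)) _ _]
      simp only [Matrix.smul_mulVec]
    have hLsurj : Function.Surjective L := by
      intro y
      refine ⟨fun j => ξ j • ((∑ j, ∑ k, (ξ j * ξ k) • B j k)⁻¹.mulVec y), ?_⟩
      rw [hLapp]
      have h1 : ∀ x : Fin n → ℝ,
          ∑ j, (∑ k, ξ k • B j k).mulVec (ξ j • x) =
            (∑ j, ∑ k, (ξ j * ξ k) • B j k).mulVec x := by
        intro x
        rw [show (∑ j, ∑ k, (ξ j * ξ k) • B j k) *ᵥ x =
            ∑ j, (∑ k, (ξ j * ξ k) • B j k) *ᵥ x from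
          map_sum (Matrix.mulVec.addMonoidHomLeft x) _ _]
        refine Finset.sum_congr rfl fun j _ => ?_
        rw [Matrix.mulVec_smul, ← Matrix.smul_mulVec, Finset.smul_sum]
        rw [show (∑ k, ξ j • ξ k • B j k) = ∑ k, (ξ j * ξ k) • B j k from
          Finset.sum_congr rfl fun k _ => smul_smul _ _ _]
      rw [h1, Matrix.mulVec_mulVec, Matrix.mul_nonsing_inv _ (isUnit_iff_ne_zero.mpr hMdet),
        Matrix.one_mulVec]
    have hrank : Module.finrank ℝ (LinearMap.ker L) = (d - 1) * n := by
      have hrn := LinearMap.finrank_range_add_finrank_ker L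
      rw [LinearMap.range_eq_top.mpr hLsurj, finrank_top] at hrn
      have e1 : Module.finrank ℝ (Fin n → ℝ) = n := by simp
      have e2 : Module.finrank ℝ (Fin d → Fin n → ℝ) = d * n := by
        rw [Module.finrank_pi_fintype, Finset.sum_congr rfl fun j _ => e1]
        simp [Finset.sum_const, mul_comm]
      rw [e1, e2] at hrn
      omega
    have hcomp2 : ∀ (v : ((Unit ⊕ Fin d) × Fin n) → ℝ) i a,
        (Asym n d B00 Cc B 0 ξ).mulVec v (Sum.inr i, a) = -(ξ i * v (Sum.inl (), a)) := by
      intro v i a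
      simp [Matrix.mulVec, dotProduct, Fintype.sum_prod_type, Fintype.sum_sum_type, Asym]
    have hcomp1 : ∀ (v : ((Unit ⊕ Fin d) × Fin n) → ℝ) (u : Unit) a,
        (Asym n d B00 Cc B 0 ξ).mulVec v (Sum.inl u, a) =
          ∑ b, (∑ k, ξ k • Cc k) a b * v (Sum.inl (), b) +
          ∑ j, ∑ b, (∑ k, ξ k • B j k) a b * v (Sum.inr j, b) := by
      intro v u a
      simp [Matrix.mulVec, dotProduct, Fintype.sum_prod_type, Fintype.sum_sum_type, Asym]
    have hmem : ∀ v : ((Unit ⊕ Fin d) × Fin n) → ℝ,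
        v ∈ LinearMap.ker (Asym n d B00 Cc B 0 ξ).mulVecLin ↔
          (∀ a, v (Sum.inl (), a) = 0) ∧
            (fun j a => v (Sum.inr j, a)) ∈ LinearMap.ker L := by
      intro v
      rw [LinearMap.mem_ker, Matrix.mulVecLin_apply, LinearMap.mem_ker, hLapp]
      constructor
      · intro h
        have hP : ∀ a, v (Sum.inl (), a) = 0 := by
          intro a
          have h2 := congrFun h (Sum.inr i0, a)
          rw [hcomp2] at h2
          simp only [Pi.zero_apply, neg_eq_zero, mul_eq_zero] at h2
          tauto
        refine ⟨hP, ?_⟩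
        funext a
        have h1 := congrFun h (Sum.inl (), a)
        rw [hcomp1] at h1
        simp only [hP, mul_zero, Finset.sum_const_zero, zero_add, Pi.zero_apply] at h1
        simpa [Matrix.mulVec, dotProduct, Finset.sum_apply] using h1
      · rintro ⟨hP, hK⟩
        funext p
        rcases p with ⟨u | i, a⟩
        · rw [Pi.zero_apply, hcomp1]
          simp only [hP, mul_zero, Finset.sum_const_zero, zero_add]
          have := congrFun hK a
          simpa [Matrix.mulVec, dotProduct, Finset.sum_apply] using this
        · rw [Pi.zero_apply, hcomp2, hP, mul_zero, neg_zero]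
    have e : LinearMap.ker (Asym n d B00 Cc B 0 ξ).mulVecLin ≃ₗ[ℝ] LinearMap.ker L :=
      { toFun := fun v => ⟨fun j a => v.1 (Sum.inr j, a), ((hmem v.1).mp v.2).2⟩
        map_add' := fun v w => rfl
        map_smul' := fun c v => rfl
        invFun := fun l => ⟨fun p => match p.1 with
            | Sum.inl _ => 0
            | Sum.inr j => l.1 j p.2, (hmem _).mpr ⟨fun a => rfl, l.2⟩⟩
        left_inv := fun v => Subtype.ext (funext fun p => by
          rcases p with ⟨u | j, a⟩
          · cases u; exact (((hmem v.1).mp v.2).1 a).symm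
          · rfl)
        right_inv := fun l => rfl }
    rw [LinearEquiv.finrank_eq e]
    exact hrank
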